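/- In any group, given elements b₁, b₂, b₃, b₄ satisfying Br(b₁,b₂) (b₁b₂b₁ = b₂b₁b₂) and Br(b₄,b₃) (b₄b₃b₄ = b₃b₄b₃), the relation Co(b₁, b₄^{b₃b₂}) (b₁ commutes with (b₃b₂)⁻¹b₄(b₃b₂)) holds if and only if Co(b₂^{b₁b₄}, b₃) holds (i.e., (b₁b₄)⁻¹b₂(b₁b₄) commutes with b₃). -/
import Mathlib


theorem type_III_relation_equiv {G : Type*} [Group G] (b₁ b₂ b₃ b₄ : G)
    (hbr12 : b₁ * b₂ * b₁ = b₂ * b₁ * b₂)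
    (hbr43 : b₄ * b₃ * b₄ = b₃ * b₄ * b₃) :
    (b₁ * ((b₃ * b₂)⁻¹ * b₄ * (b₃ * b₂)) = ((b₃ * b₂)⁻¹ * b₄ * (b₃ * b₂)) * b₁) ↔
      (((b₁ * b₄)⁻¹ * b₂ * (b₁ * b₄)) * b₃ = b₃ * ((b₁ * b₄)⁻¹ * b₂ * (b₁ * b₄))) := by
  have h2 : b₂ * b₁ * b₂⁻¹ = b₁⁻¹ * b₂ * b₁ := by
    calc b₂ * b₁ * b₂⁻¹ = b₁⁻¹ * (b₁ * b₂ * b₁) * b₂⁻¹ := by group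
      _ = b₁⁻¹ * (b₂ * b₁ * b₂) * b₂⁻¹ := by rw [hbr12]
      _ = b₁⁻¹ * b₂ * b₁ := by group
  have h4 : b₃⁻¹ * b₄ * b₃ = b₄ * b₃ * b₄⁻¹ := by
    calc b₃⁻¹ * b₄ * b₃ = b₃⁻¹ * (b₄ * b₃ * b₄) * b₄⁻¹ := by group
      _ = b₃⁻¹ * (b₃ * b₄ * b₃) * b₄⁻¹ := by rw [hbr43]
      _ = b₄ * b₃ * b₄⁻¹ := by group
  constructor
  · intro h
    calc (b₁ * b₄)⁻¹ * b₂ * (b₁ * b₄) * b₃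
        = b₄⁻¹ * (b₁⁻¹ * b₂ * b₁) * (b₄ * b₃ * b₄⁻¹) * b₄ := by group
      _ = b₄⁻¹ * (b₁⁻¹ * b₂ * b₁) * (b₃⁻¹ * b₄ * b₃) * b₄ := by rw [h4]
      _ = b₄⁻¹ * b₃⁻¹ * (b₃ * (b₁⁻¹ * b₂ * b₁) * b₃⁻¹) * b₄ * (b₃ * b₄) := by group
      _ = b₄⁻¹ * b₃⁻¹ * (b₃ * (b₂ * b₁ * b₂⁻¹) * b₃⁻¹) * b₄ * (b₃ * b₄) := by rw [h2]
      _ = b₄⁻¹ * b₃⁻¹ * ((b₃ * b₂) * (b₁ * ((b₃ * b₂)⁻¹ * b₄ * (b₃ * b₂))) *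
            (b₃ * b₂)⁻¹) * (b₃ * b₄) := by group
      _ = b₄⁻¹ * b₃⁻¹ * ((b₃ * b₂) * (((b₃ * b₂)⁻¹ * b₄ * (b₃ * b₂)) * b₁) *
            (b₃ * b₂)⁻¹) * (b₃ * b₄) := by rw [h]
      _ = b₄⁻¹ * (b₃⁻¹ * b₄ * b₃) * (b₂ * b₁ * b₂⁻¹) * b₄ := by group
      _ = b₄⁻¹ * (b₄ * b₃ * b₄⁻¹) * (b₁⁻¹ * b₂ * b₁) * b₄ := by rw [h4, h2]
      _ = b₃ * ((b₁ * b₄)⁻¹ * b₂ * (b₁ * b₄)) := by group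
  · intro h
    calc b₁ * ((b₃ * b₂)⁻¹ * b₄ * (b₃ * b₂))
        = (b₃ * b₂)⁻¹ * b₃ * (b₂ * b₁ * b₂⁻¹) * (b₃⁻¹ * b₄ * b₃) * b₂ := by group
      _ = (b₃ * b₂)⁻¹ * b₃ * (b₁⁻¹ * b₂ * b₁) * (b₄ * b₃ * b₄⁻¹) * b₂ := by rw [h2, h4]
      _ = (b₃ * b₂)⁻¹ * b₃ * b₄ * (((b₁ * b₄)⁻¹ * b₂ * (b₁ * b₄)) * b₃) * b₄⁻¹ * b₂ := by
            group
      _ = (b₃ * b₂)⁻¹ * b₃ * b₄ * (b₃ * ((b₁ * b₄)⁻¹ * b₂ * (b₁ * b₄))) * b₄⁻¹ * b₂ := by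
            rw [h]
      _ = (b₃ * b₂)⁻¹ * b₃ * (b₄ * b₃ * b₄⁻¹) * (b₁⁻¹ * b₂ * b₁) * b₂ := by group
      _ = (b₃ * b₂)⁻¹ * b₃ * (b₃⁻¹ * b₄ * b₃) * (b₂ * b₁ * b₂⁻¹) * b₂ := by rw [h2, h4]
      _ = ((b₃ * b₂)⁻¹ * b₄ * (b₃ * b₂)) * b₁ := by group
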